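/- If a fuzzy-valued function f is gS-differentiable at t and λ ∈ ℝ, then λ·f is gS-differentiable at t, with the α-level sets of (λf)'(t) equal to λ times the α-level sets of f'(t) (interval-scaled, reversing endpoints when λ < 0). -/

import Mathlib

def IsFuzzyLevel (L U : ℝ → ℝ) : Prop :=
  MonotoneOn L (Set.Icc 0 1) ∧ AntitoneOn U (Set.Icc 0 1) ∧
    ∀ α ∈ Set.Icc (0:ℝ) 1, L α ≤ U α

lemma min_mul_lam (lam a b : ℝ) :
    min (lam * a) (lam * b) =
      if 0 ≤ lam then lam * min a b else lam * max a b := by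
  rcases le_total a b with h | h <;> split <;>
    rename_i hl <;>
    [ rw [min_eq_left (mul_le_mul_of_nonneg_left h hl), min_eq_left h];
      rw [min_eq_right (mul_le_mul_of_nonpos_left h (le_of_not_ge hl)), max_eq_right h];
      rw [min_eq_right (mul_le_mul_of_nonneg_left h hl), min_eq_right h];
      rw [min_eq_left (mul_le_mul_of_nonpos_left h (le_of_not_ge hl)), max_eq_left h]]

lemma max_mul' (lam a b : ℝ) :
    max (lam * a) (lam * b) =
      if 0 ≤ lam then lam * max a b else lam * min a b := by
  rcases le_total a b with h | h <;> split <;>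
    rename_i hl <;>
    [ rw [max_eq_right (mul_le_mul_of_nonneg_left h hl), max_eq_right h];
      rw [max_eq_left (mul_le_mul_of_nonpos_left h (le_of_not_ge hl)), min_eq_left h];
      rw [max_eq_left (mul_le_mul_of_nonneg_left h hl), max_eq_left h];
      rw [max_eq_right (mul_le_mul_of_nonpos_left h (le_of_not_ge hl)), min_eq_right h]]

/-- If `f` is gS-differentiable at `t` and `λ ∈ ℝ`, then `λ·f` is
gS-differentiable at `t`, its gS-derivative level sets being `λ` times those of
`f'(t)` (endpoints reversed when `λ < 0`). -/
theorem gS_smul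
    (f₁ f₂ : ℝ → ℝ → ℝ) (f₁' f₂' : ℝ → ℝ) (t lam : ℝ)
    (hf : ∀ α ∈ Set.Icc (0:ℝ) 1,
      HasDerivAt (fun s => f₁ s α) (f₁' α) t ∧
      HasDerivAt (fun s => f₂ s α) (f₂' α) t)
    (hfuzzy : IsFuzzyLevel (fun α => min (f₁' α) (f₂' α))
      (fun α => max (f₁' α) (f₂' α))) :
    (∀ α ∈ Set.Icc (0:ℝ) 1,
      HasDerivAt (fun s => lam * f₁ s α) (lam * f₁' α) t ∧
      HasDerivAt (fun s => lam * f₂ s α) (lam * f₂' α) t) ∧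
    IsFuzzyLevel (fun α => min (lam * f₁' α) (lam * f₂' α))
      (fun α => max (lam * f₁' α) (lam * f₂' α)) ∧
    (∀ α ∈ Set.Icc (0:ℝ) 1,
      min (lam * f₁' α) (lam * f₂' α)
        = (if 0 ≤ lam then lam * min (f₁' α) (f₂' α)
           else lam * max (f₁' α) (f₂' α)) ∧
      max (lam * f₁' α) (lam * f₂' α)
        = (if 0 ≤ lam then lam * max (f₁' α) (f₂' α)
           else lam * min (f₁' α) (f₂' α))) := by
  obtain ⟨hL, hU, hLU⟩ := hfuzzy
  refine ⟨fun α hα => ⟨((hf α hα).1).const_mul lam, ((hf α hα).2).const_mul lam⟩,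
    ⟨?_, ?_, ?_⟩, fun α hα => ⟨min_mul_lam lam _ _, max_mul' lam _ _⟩⟩
  · intro a ha b hb hab
    simp only []
    rw [min_mul_lam, min_mul_lam]
    split
    · exact mul_le_mul_of_nonneg_left (hL ha hb hab) (by assumption)
    · exact mul_le_mul_of_nonpos_left (hU ha hb hab) (by linarith [lt_of_not_ge ‹¬ 0 ≤ lam›])
  · intro a ha b hb hab
    simp only []
    rw [max_mul', max_mul']
    split
    · exact mul_le_mul_of_nonneg_left (hU ha hb hab) (by assumption)
    · exact mul_le_mul_of_nonpos_left (hL ha hb hab) (by linarith [lt_of_not_ge ‹¬ 0 ≤ lam›])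
  · intro α hα
    exact min_le_max
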